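/- Under the channel symmetry condition, the linear program with cost λ (from observation y) has a feasible point (f,w) ∈ Q with f ≠ Ξ(c) and λ·f^T ≤ λ·Ξ(c)^T if and only if the linear program with cost λ̃ (from observation ỹ = G(y)) has a feasible point (f̃,w̃) ∈ Q with f̃ ≠ Ξ(0) and λ̃·f̃^T ≤ λ̃·Ξ(0)^T. Consequently, the LP-decoding error set satisfies G(B(c)) = B(0). -/

import Mathlib

open Finset
open scoped Classical

/-- The single parity check code C_j associated with row j of H. -/
def SPC {R : Type} [CommRing R] [DecidableEq R] {m n : ℕ} (H : Matrix (Fin m) (Fin n) R)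
    (j : Fin m) : Set ({i : Fin n // H j i ≠ 0} → R) :=
  {b | ∑ i : {i : Fin n // H j i ≠ 0}, b i * H j i.1 = 0}

/-- The projection of c ∈ R^n onto the support of row j. -/
def proj {R : Type} [CommRing R] {m n : ℕ} (H : Matrix (Fin m) (Fin n) R)
    (j : Fin m) (c : Fin n → R) : {i : Fin n // H j i ≠ 0} → R :=
  fun i => c i.1

/-- Membership in the LP decoding polytope Q: w is nonnegative on each C_j,
sums to one over each C_j, and f is consistent with w. -/
def memQ {R : Type} [CommRing R] [Fintype R] [DecidableEq R] {m n : ℕ}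
    (H : Matrix (Fin m) (Fin n) R)
    (f : Fin n → {α : R // α ≠ 0} → ℝ)
    (w : (j : Fin m) → ({i : Fin n // H j i ≠ 0} → R) → ℝ) : Prop :=
  (∀ (j : Fin m) (b : {i : Fin n // H j i ≠ 0} → R), b ∈ SPC H j → 0 ≤ w j b) ∧
  (∀ j : Fin m,
    ∑ b : {i : Fin n // H j i ≠ 0} → R, (if b ∈ SPC H j then w j b else 0) = 1) ∧
  (∀ (j : Fin m) (i : {i : Fin n // H j i ≠ 0}) (α : {α : R // α ≠ 0}),
    f i.1 α = ∑ b : {i : Fin n // H j i ≠ 0} → R,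
      (if b ∈ SPC H j ∧ b i = α.1 then w j b else 0))

/-- The f-part of the translation map L determined by the codeword c. -/
def Lf {R : Type} [CommRing R] [Fintype R] [DecidableEq R] {n : ℕ} (c : Fin n → R)
    (f : Fin n → {α : R // α ≠ 0} → ℝ) : Fin n → {α : R // α ≠ 0} → ℝ :=
  fun i α =>
    if h : (α : R) = -(c i) then 1 - ∑ γ : {γ : R // γ ≠ 0}, f i γ
    else f i ⟨(α : R) + c i, fun hz => h (eq_neg_iff_add_eq_zero.mpr hz)⟩

/-- The w-part of the translation map L determined by the codeword c. -/
def Lw {R : Type} [CommRing R] [DecidableEq R] {m n : ℕ} (H : Matrix (Fin m) (Fin n) R)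
    (c : Fin n → R)
    (w : (j : Fin m) → ({i : Fin n // H j i ≠ 0} → R) → ℝ) :
    (j : Fin m) → ({i : Fin n // H j i ≠ 0} → R) → ℝ :=
  fun j r => w j (r + proj H j c)

/-- The indicator embedding Ξ of R^n. -/
def Xi {R : Type} [Ring R] [DecidableEq R] {n : ℕ} (c : Fin n → R) :
    Fin n → {γ : R // γ ≠ 0} → ℝ :=
  fun i γ => if (γ : R) = c i then 1 else 0

/-- The global LP cost λ·f for log-likelihood ratios λ computed from y. -/
noncomputable def LPcost {R : Type} [CommRing R] [Fintype R] [DecidableEq R] {n : ℕ}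
    {S : Type} (p : R → S → ℝ) (y : Fin n → S)
    (f : Fin n → {α : R // α ≠ 0} → ℝ) : ℝ :=
  ∑ i : Fin n, ∑ α : {α : R // α ≠ 0},
    Real.log (p 0 (y i) / p (α : R) (y i)) * f i α

/-- The LP-decoding error set B(c): channel outputs for which some feasible
point f ≠ Ξ(c) has cost no larger than that of Ξ(c). -/
def Bset {R : Type} [CommRing R] [Fintype R] [DecidableEq R] {m n : ℕ}
    (H : Matrix (Fin m) (Fin n) R) {S : Type} (p : R → S → ℝ)
    (c : Fin n → R) : Set (Fin n → S) :=
  {y | ∃ (f : Fin n → {α : R // α ≠ 0} → ℝ)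
      (w : (j : Fin m) → ({i : Fin n // H j i ≠ 0} → R) → ℝ),
    memQ H f w ∧ f ≠ Xi c ∧ LPcost p y f ≤ LPcost p y (Xi c)}

section Aux

variable {R : Type} [CommRing R] [Fintype R] [DecidableEq R]

/-- Extension of `f i` to all of `R`, assigning mass `1 - ∑ f i` to `0`. -/
noncomputable def fbar {n : ℕ} (f : Fin n → {α : R // α ≠ 0} → ℝ) (i : Fin n) (β : R) : ℝ :=
  if h : β = 0 then 1 - ∑ γ : {γ : R // γ ≠ 0}, f i γ else f i ⟨β, h⟩

lemma sum_sub_ne_zero (g : R → ℝ) :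
    ∑ α : {α : R // α ≠ 0}, g ↑α = ∑ β ∈ Finset.univ.erase (0 : R), g β :=
  (Finset.sum_subtype _ (by simp) g).symm

lemma sum_erase_eq (g : R → ℝ) (a : R) :
    ∑ β ∈ Finset.univ.erase a, g β = (∑ β : R, g β) - g a := by
  have := Finset.sum_erase_add Finset.univ g (Finset.mem_univ a)
  linarith

lemma sum_shift (c : R) (g : R → ℝ) : ∑ β : R, g (β + c) = ∑ β : R, g β := by
  simpa using Equiv.sum_comp (Equiv.addRight c) g

lemma fbar_sum {n : ℕ} (f : Fin n → {α : R // α ≠ 0} → ℝ) (i : Fin n) :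
    ∑ β : R, fbar f i β = 1 := by
  have h1 : ∑ β ∈ Finset.univ.erase (0 : R), fbar f i β = ∑ γ : {γ : R // γ ≠ 0}, f i γ := by
    rw [← sum_sub_ne_zero (fbar f i)]
    exact Finset.sum_congr rfl fun γ _ => by simp [fbar, γ.2]
  have h2 := Finset.sum_erase_add Finset.univ (fbar f i) (Finset.mem_univ (0 : R))
  rw [h1] at h2
  have h3 : fbar f i 0 = 1 - ∑ γ : {γ : R // γ ≠ 0}, f i γ := dif_pos rfl
  rw [h3] at h2
  linarith

lemma Lf_apply {n : ℕ} (c : Fin n → R) (f : Fin n → {α : R // α ≠ 0} → ℝ)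
    (i : Fin n) (α : {α : R // α ≠ 0}) :
    Lf c f i α = fbar f i ((α : R) + c i) := by
  unfold Lf fbar
  by_cases h : (α : R) = -(c i)
  · rw [dif_pos h, dif_pos (by rw [h]; ring)]
  · rw [dif_neg h, dif_neg (fun hz => h (eq_neg_iff_add_eq_zero.mpr hz))]

lemma fbar_Lf {n : ℕ} (c : Fin n → R) (f : Fin n → {α : R // α ≠ 0} → ℝ)
    (i : Fin n) (β : R) :
    fbar (Lf c f) i β = fbar f i (β + c i) := by
  by_cases h : β = 0
  · subst h
    rw [show fbar (Lf c f) i 0 = 1 - ∑ γ : {γ : R // γ ≠ 0}, Lf c f i γ from dif_pos rfl]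
    have h1 : ∑ γ : {γ : R // γ ≠ 0}, Lf c f i γ
        = ∑ γ : {γ : R // γ ≠ 0}, fbar f i (↑γ + c i) :=
      Finset.sum_congr rfl fun γ _ => Lf_apply c f i γ
    rw [h1, sum_sub_ne_zero (fun β => fbar f i (β + c i)),
      sum_erase_eq (fun β => fbar f i (β + c i)) 0,
      sum_shift (c i) (fbar f i), fbar_sum, zero_add]
    ring
  · rw [show fbar (Lf c f) i β = Lf c f i ⟨β, h⟩ from dif_neg h, Lf_apply]

lemma Lf_Lf_neg {n : ℕ} (c : Fin n → R) (f : Fin n → {α : R // α ≠ 0} → ℝ) :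
    Lf (-c) (Lf c f) = f := by
  funext i α
  rw [Lf_apply, fbar_Lf]
  have h1 : (α : R) + (-c) i + c i = (α : R) := by simp
  rw [h1]
  simp [fbar, α.2]

lemma fbar_Xi {n : ℕ} (d : Fin n → R) (i : Fin n) (β : R) :
    fbar (Xi d) i β = if β = d i then 1 else 0 := by
  by_cases h : β = 0
  · subst h
    rw [show fbar (Xi d) i 0 = 1 - ∑ γ : {γ : R // γ ≠ 0}, Xi d i γ from dif_pos rfl]
    have h1 : ∑ γ : {γ : R // γ ≠ 0}, Xi d i γ
        = if d i ∈ Finset.univ.erase (0 : R) then 1 else 0 := by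
      rw [show (∑ γ : {γ : R // γ ≠ 0}, Xi d i γ)
          = ∑ γ : {γ : R // γ ≠ 0}, (fun β => if β = d i then (1:ℝ) else 0) ↑γ from rfl,
        sum_sub_ne_zero (fun β => if β = d i then (1:ℝ) else 0)]
      exact Finset.sum_ite_eq' _ _ _
    rw [h1]
    by_cases hd : d i = 0
    · simp [hd]
    · simp [hd, Ne.symm hd]
  · rw [show fbar (Xi d) i β = Xi d i ⟨β, h⟩ from dif_neg h]
    rfl

lemma Lf_Xi {n : ℕ} (c : Fin n → R) : Lf c (Xi c) = Xi (0 : Fin n → R) := by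
  funext i α
  rw [Lf_apply, fbar_Xi]
  simp [Xi, α.2]

lemma sum_proj_eq {m n : ℕ} (H : Matrix (Fin m) (Fin n) R) (j : Fin m) (c : Fin n → R) :
    ∑ i : {i : Fin n // H j i ≠ 0}, proj H j c i * H j i.1 = ∑ i : Fin n, c i * H j i := by
  rw [show (∑ i : {i : Fin n // H j i ≠ 0}, proj H j c i * H j i.1)
      = ∑ i : {i : Fin n // H j i ≠ 0}, (fun i => c i * H j i) ↑i from rfl,
    ← Finset.sum_subtype (Finset.univ.filter (fun i => H j i ≠ 0)) (by simp)
      (fun i => c i * H j i)]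
  exact Finset.sum_filter_of_ne fun i _ h0 hH => h0 (by rw [hH, mul_zero])

lemma SPC_shift {m n : ℕ} (H : Matrix (Fin m) (Fin n) R) (j : Fin m) (c : Fin n → R)
    (hc : ∑ i : Fin n, c i * H j i = 0) (b : {i : Fin n // H j i ≠ 0} → R) :
    (b + proj H j c) ∈ SPC H j ↔ b ∈ SPC H j := by
  unfold SPC
  simp only [Set.mem_setOf_eq, Pi.add_apply, add_mul, Finset.sum_add_distrib,
    sum_proj_eq, hc, add_zero]

lemma memQ_L {m n : ℕ} (H : Matrix (Fin m) (Fin n) R) (c : Fin n → R)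
    (hc : ∀ j : Fin m, ∑ i : Fin n, c i * H j i = 0)
    {f : Fin n → {α : R // α ≠ 0} → ℝ}
    {w : (j : Fin m) → ({i : Fin n // H j i ≠ 0} → R) → ℝ}
    (hQ : memQ H f w) : memQ H (Lf c f) (Lw H c w) := by
  obtain ⟨h1, h2, h3⟩ := hQ
  refine ⟨?_, ?_, ?_⟩
  · intro j b hb
    exact h1 j _ ((SPC_shift H j c (hc j) b).mpr hb)
  · intro j
    have key := Equiv.sum_comp (Equiv.addRight (proj H j c))
      (fun b => if b ∈ SPC H j then w j b else 0)
    rw [← h2 j, ← key]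
    refine Finset.sum_congr rfl fun b _ => ?_
    unfold Lw
    simp only [Equiv.coe_addRight]
    simp only [SPC_shift H j c (hc j) b]
  · intro j i α
    have key := Equiv.sum_comp (Equiv.addRight (proj H j c))
      (fun b => if b ∈ SPC H j ∧ b i = (α : R) + c i.1 then w j b else 0)
    have step1 : (∑ b : {i : Fin n // H j i ≠ 0} → R,
        if b ∈ SPC H j ∧ b i = (α : R) then Lw H c w j b else 0)
        = ∑ b : {i : Fin n // H j i ≠ 0} → R,
          if b ∈ SPC H j ∧ b i = (α : R) + c i.1 then w j b else 0 := by
      rw [← key]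
      refine Finset.sum_congr rfl fun b _ => ?_
      unfold Lw
      simp only [Equiv.coe_addRight, Pi.add_apply]
      simp only [SPC_shift H j c (hc j) b]
      have : (b i + proj H j c i = (α : R) + c i.1) ↔ (b i = (α : R)) := by
        unfold proj
        constructor
        · intro h; exact add_right_cancel h
        · intro h; rw [h]
      exact if_congr (and_congr_right fun _ => this.symm) rfl rfl
    rw [Lf_apply, step1]
    by_cases h0 : (α : R) + c i.1 = 0
    · rw [show fbar f i.1 ((α : R) + c i.1) = 1 - ∑ γ : {γ : R // γ ≠ 0}, f i.1 γ by
        rw [h0]; exact dif_pos rfl]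
      have hS : ∑ γ : {γ : R // γ ≠ 0}, f i.1 γ
          = ∑ b : {i : Fin n // H j i ≠ 0} → R,
              (if b ∈ SPC H j ∧ b i ≠ 0 then w j b else 0) := by
        have e1 : ∑ γ : {γ : R // γ ≠ 0}, f i.1 γ
            = ∑ γ : {γ : R // γ ≠ 0}, ∑ b : {i : Fin n // H j i ≠ 0} → R,
                (if b ∈ SPC H j ∧ b i = (γ : R) then w j b else 0) :=
          Finset.sum_congr rfl fun γ _ => h3 j i γ
        rw [e1, Finset.sum_comm]
        refine Finset.sum_congr rfl fun b _ => ?_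
        by_cases hb : b ∈ SPC H j
        · rw [show (∑ γ : {γ : R // γ ≠ 0}, if b ∈ SPC H j ∧ b i = (γ : R) then w j b else 0)
              = ∑ γ : {γ : R // γ ≠ 0},
                  (fun β => if β = b i then w j b else 0) ↑γ from by
              refine Finset.sum_congr rfl fun γ _ => ?_
              simp only [hb, true_and]
              by_cases hbi : b i = (γ : R)
              · rw [if_pos hbi, if_pos hbi.symm]
              · rw [if_neg hbi, if_neg (Ne.symm hbi)],
            sum_sub_ne_zero (fun β => if β = b i then w j b else 0),
            Finset.sum_ite_eq' _ _ _]
          simp only [Finset.mem_erase, Finset.mem_univ, and_true, hb, true_and]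
        · simp [hb]
      have hT := h2 j
      have hsplit : ∑ b : {i : Fin n // H j i ≠ 0} → R, (if b ∈ SPC H j then w j b else 0)
          = (∑ b : {i : Fin n // H j i ≠ 0} → R,
              (if b ∈ SPC H j ∧ b i = 0 then w j b else 0))
            + ∑ b : {i : Fin n // H j i ≠ 0} → R,
              (if b ∈ SPC H j ∧ b i ≠ 0 then w j b else 0) := by
        rw [← Finset.sum_add_distrib]
        refine Finset.sum_congr rfl fun b _ => ?_
        by_cases hb : b ∈ SPC H j
        · by_cases hbi : b i = 0 <;> simp [hb, hbi]
        · simp [hb]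
      rw [hT] at hsplit
      rw [h0]
      linarith
    · rw [show fbar f i.1 ((α : R) + c i.1) = f i.1 ⟨(α : R) + c i.1, h0⟩ from dif_neg h0]
      exact h3 j i ⟨(α : R) + c i.1, h0⟩

lemma LPcost_Xi_zero {n : ℕ} {S : Type} (p : R → S → ℝ) (y : Fin n → S) :
    LPcost p y (Xi (0 : Fin n → R)) = 0 := by
  unfold LPcost
  refine Finset.sum_eq_zero fun i _ => Finset.sum_eq_zero fun α _ => ?_
  have : Xi (0 : Fin n → R) i α = 0 := by simp [Xi, α.2]
  rw [this, mul_zero]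

lemma cost_identity {n : ℕ} {S : Type} (p : R → S → ℝ) (hp : ∀ (α : R) (y : S), 0 < p α y)
    (τ : R → S → S) (hsym : ∀ (β : R) (y : S) (α : R), p α y = p (α - β) (τ β y))
    (c : Fin n → R) (y : Fin n → S) (f : Fin n → {α : R // α ≠ 0} → ℝ) :
    LPcost p (fun i => τ (c i) (y i)) (Lf c f) = LPcost p y f - LPcost p y (Xi c) := by
  unfold LPcost
  rw [← Finset.sum_sub_distrib]
  refine Finset.sum_congr rfl fun i _ => ?_
  set L : R → ℝ := fun β => Real.log (p β (y i)) with hLdef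
  set F : R → ℝ := fbar f i with hFdef
  have hF1 : ∑ β : R, F β = 1 := fbar_sum f i
  have hplog : ∀ α : R, Real.log (p 0 (τ (c i) (y i)) / p α (τ (c i) (y i)))
      = L (c i) - L (α + c i) := by
    intro α
    have e1 : p 0 (τ (c i) (y i)) = p (c i) (y i) := by
      have := hsym (c i) (y i) (c i); simpa using this.symm
    have e2 : p α (τ (c i) (y i)) = p (α + c i) (y i) := by
      have := hsym (c i) (y i) (α + c i); simpa using this.symm
    rw [e1, e2, Real.log_div (ne_of_gt (hp _ _)) (ne_of_gt (hp _ _))]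
  have hlog : ∀ α : R, Real.log (p 0 (y i) / p α (y i)) = L 0 - L α := fun α =>
    Real.log_div (ne_of_gt (hp _ _)) (ne_of_gt (hp _ _))
  have hLHS : (∑ α : {α : R // α ≠ 0},
      Real.log (p 0 (τ (c i) (y i)) / p (α : R) (τ (c i) (y i))) * Lf c f i α)
      = ∑ β : R, (L (c i) - L β) * F β := by
    have e1 : (∑ α : {α : R // α ≠ 0},
        Real.log (p 0 (τ (c i) (y i)) / p (α : R) (τ (c i) (y i))) * Lf c f i α)
        = ∑ α : {α : R // α ≠ 0},
            (fun β => (L (c i) - L (β + c i)) * F (β + c i)) ↑α := by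
      refine Finset.sum_congr rfl fun α _ => ?_
      rw [hplog, Lf_apply]
    rw [e1, sum_sub_ne_zero (fun β => (L (c i) - L (β + c i)) * F (β + c i)),
      sum_erase_eq (fun β => (L (c i) - L (β + c i)) * F (β + c i)) 0,
      sum_shift (c i) (fun β => (L (c i) - L β) * F β), zero_add, sub_self, zero_mul,
      sub_zero]
  have hRHS1 : (∑ α : {α : R // α ≠ 0},
      Real.log (p 0 (y i) / p (α : R) (y i)) * f i α)
      = ∑ β : R, (L 0 - L β) * F β := by
    have e1 : (∑ α : {α : R // α ≠ 0},
        Real.log (p 0 (y i) / p (α : R) (y i)) * f i α)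
        = ∑ α : {α : R // α ≠ 0}, (fun β => (L 0 - L β) * F β) ↑α := by
      refine Finset.sum_congr rfl fun α _ => ?_
      rw [hlog]
      congr 1
      rw [hFdef]
      simp [fbar, α.2]
    rw [e1, sum_sub_ne_zero (fun β => (L 0 - L β) * F β),
      sum_erase_eq (fun β => (L 0 - L β) * F β) 0, sub_self, zero_mul, sub_zero]
  have hRHS2 : (∑ α : {α : R // α ≠ 0},
      Real.log (p 0 (y i) / p (α : R) (y i)) * Xi c i α) = L 0 - L (c i) := by
    have e1 : (∑ α : {α : R // α ≠ 0},
        Real.log (p 0 (y i) / p (α : R) (y i)) * Xi c i α)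
        = ∑ α : {α : R // α ≠ 0},
            (fun β => if β = c i then L 0 - L β else 0) ↑α := by
      refine Finset.sum_congr rfl fun α _ => ?_
      rw [hlog]
      unfold Xi
      by_cases hα : (α : R) = c i
      · simp [hα]
      · simp [hα]
    rw [e1, sum_sub_ne_zero (fun β => if β = c i then L 0 - L β else 0),
      Finset.sum_ite_eq' _ _ _]
    by_cases hci : c i = 0
    · simp [hci]
    · simp [hci]
  rw [hLHS, hRHS1, hRHS2]
  have e2 : (∑ β : R, (L (c i) - L β) * F β) - ∑ β : R, (L 0 - L β) * F β
      = ∑ β : R, (L (c i) - L 0) * F β := by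
    rw [← Finset.sum_sub_distrib]
    exact Finset.sum_congr rfl fun β _ => by ring
  have e3 : ∑ β : R, (L (c i) - L 0) * F β = L (c i) - L 0 := by
    rw [← Finset.mul_sum, hF1, mul_one]
  linarith

end Aux

/-- Under the channel symmetry condition, a competing feasible point exists for
(y, c) iff one exists for (G(y), 0); consequently G(B(c)) = B(0). -/
theorem error_set_translation {R : Type} [CommRing R] [Fintype R] [DecidableEq R]
    {m n : ℕ} (H : Matrix (Fin m) (Fin n) R) (c : Fin n → R)
    (hc : ∀ j : Fin m, ∑ i : Fin n, c i * H j i = 0)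
    {S : Type} (p : R → S → ℝ) (hp : ∀ (α : R) (y : S), 0 < p α y)
    (τ : R → S → S) (hbij : ∀ β : R, Function.Bijective (τ β))
    (hsym : ∀ (β : R) (y : S) (α : R), p α y = p (α - β) (τ β y)) :
    (∀ y : Fin n → S,
      ((∃ (f : Fin n → {α : R // α ≠ 0} → ℝ)
          (w : (j : Fin m) → ({i : Fin n // H j i ≠ 0} → R) → ℝ),
        memQ H f w ∧ f ≠ Xi c ∧ LPcost p y f ≤ LPcost p y (Xi c)) ↔
       (∃ (ft : Fin n → {α : R // α ≠ 0} → ℝ)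
          (wt : (j : Fin m) → ({i : Fin n // H j i ≠ 0} → R) → ℝ),
        memQ H ft wt ∧ ft ≠ Xi (0 : Fin n → R) ∧
          LPcost p (fun i => τ (c i) (y i)) ft ≤
            LPcost p (fun i => τ (c i) (y i)) (Xi (0 : Fin n → R))))) ∧
    (fun y : Fin n → S => fun i => τ (c i) (y i)) '' Bset H p c =
      Bset H p (0 : Fin n → R) := by
  have hcneg : ∀ j : Fin m, ∑ i : Fin n, (-c) i * H j i = 0 := by
    intro j
    have : ∑ i : Fin n, (-c) i * H j i = -∑ i : Fin n, c i * H j i := by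
      rw [← Finset.sum_neg_distrib]
      exact Finset.sum_congr rfl fun i _ => by simp
    rw [this, hc j, neg_zero]
  have hinv : ∀ ft : Fin n → {α : R // α ≠ 0} → ℝ, Lf c (Lf (-c) ft) = ft := by
    intro ft
    have := Lf_Lf_neg (-c) ft
    rwa [neg_neg] at this
  have key : ∀ y : Fin n → S,
      ((∃ (f : Fin n → {α : R // α ≠ 0} → ℝ)
          (w : (j : Fin m) → ({i : Fin n // H j i ≠ 0} → R) → ℝ),
        memQ H f w ∧ f ≠ Xi c ∧ LPcost p y f ≤ LPcost p y (Xi c)) ↔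
       (∃ (ft : Fin n → {α : R // α ≠ 0} → ℝ)
          (wt : (j : Fin m) → ({i : Fin n // H j i ≠ 0} → R) → ℝ),
        memQ H ft wt ∧ ft ≠ Xi (0 : Fin n → R) ∧
          LPcost p (fun i => τ (c i) (y i)) ft ≤
            LPcost p (fun i => τ (c i) (y i)) (Xi (0 : Fin n → R)))) := by
    intro y
    constructor
    · rintro ⟨f, w, hQ, hne, hcost⟩
      refine ⟨Lf c f, Lw H c w, memQ_L H c hc hQ, ?_, ?_⟩
      · intro hEq
        apply hne
        have h4 := congrArg (Lf (-c)) hEq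
        rw [Lf_Lf_neg, ← Lf_Xi c, Lf_Lf_neg] at h4
        exact h4
      · rw [cost_identity p hp τ hsym c y f, LPcost_Xi_zero]
        linarith
    · rintro ⟨ft, wt, hQ, hne, hcost⟩
      refine ⟨Lf (-c) ft, Lw H (-c) wt, memQ_L H (-c) hcneg hQ, ?_, ?_⟩
      · intro hEq
        apply hne
        have h4 := congrArg (Lf c) hEq
        rwa [hinv, Lf_Xi c] at h4
      · have hid := cost_identity p hp τ hsym c y (Lf (-c) ft)
        rw [hinv] at hid
        rw [LPcost_Xi_zero] at hcost
        linarith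
  refine ⟨key, ?_⟩
  ext z
  simp only [Set.mem_image, Bset, Set.mem_setOf_eq]
  constructor
  · rintro ⟨y, hy, rfl⟩
    exact (key y).mp hy
  · intro hz
    refine ⟨fun i => (Equiv.ofBijective _ (hbij (c i))).symm (z i), ?_, ?_⟩
    · apply (key _).mpr
      have hzz : (fun i => τ (c i) ((Equiv.ofBijective _ (hbij (c i))).symm (z i))) = z := by
        funext i
        exact (Equiv.ofBijective _ (hbij (c i))).apply_symm_apply (z i)
      rw [hzz]
      exact hz
    · funext i
      exact (Equiv.ofBijective _ (hbij (c i))).apply_symm_apply (z i)
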